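/- Fix n ≥ 3 and parameters α₄,…,α_n, θ in ℂ. Let L(α₄,…,α_n,θ) be the Leibniz superalgebra with even basis e₁,…,e_n and odd basis y₁,…,y_{n-1} and multiplication table (1) of the paper. Every even derivation d of L(α₄,…,α_n,θ) satisfies: there exist scalars a₁,…,a_{n-1}, b_n such that d(e₁) = 2a₁e₁ + a₂e₃ + a₃e₄ + ⋯ + a_{n-1}e_n, d(e₂) = 2a₁e₂ + a₂e₃ + ⋯ + a_{n-2}e_{n-1} + b_n e_n, d(e_i) = 2(i-1)a₁ e_i + a₂e_{i+1} + ⋯ + a_{n-i+1}e_n for 3 ≤ i ≤ n, d(y_i) = (2i-1)a₁ y_i + a₂y_{i+1} + ⋯ + a_{n-i}y_{n-1} for 1 ≤ i ≤ n-1; moreover (n-3)θa₁ = 0 and α_i a₁ = 0 for 4 ≤ i ≤ n. -/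

import Mathlib

open Finset

private lemma hsum_shift {M : Type*} [AddCommMonoid M] (f : ℕ → M) (p q r p' q' : ℕ)
    (hp : p' = p + r) (hq : q' = q + r) :
    (∑ k ∈ Icc p q, f (k + r)) = ∑ k ∈ Icc p' q', f k := by
  subst hp hq
  rw [← Finset.map_add_right_Icc, Finset.sum_map]
  rfl

private lemma hsum_bot {M : Type*} [AddCommMonoid M] (f : ℕ → M) {p p' q : ℕ} (h : p ≤ q)
    (hp : p' = p + 1) :
    (∑ k ∈ Icc p q, f k) = f p + ∑ k ∈ Icc p' q, f k := by
  subst hp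
  have he : Icc p q = insert p (Icc (p + 1) q) := by
    ext x; simp only [mem_Icc, mem_insert]; omega
  rw [he, Finset.sum_insert (by simp only [mem_Icc]; omega)]

private lemma hsum_top {M : Type*} [AddCommMonoid M] (f : ℕ → M) {p q q' : ℕ} (h : p ≤ q)
    (h1 : 1 ≤ q) (hq : q' = q - 1) :
    (∑ k ∈ Icc p q, f k) = (∑ k ∈ Icc p q', f k) + f q := by
  subst hq
  have he : Icc p q = insert q (Icc p (q - 1)) := by
    ext x; simp only [mem_Icc, mem_insert]; omega
  rw [he, Finset.sum_insert (by simp only [mem_Icc]; omega), add_comm]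

private lemma hsum_trunc {M : Type*} [AddCommMonoid M] (f : ℕ → M) {p q q' : ℕ} (h : q' ≤ q)
    (hz : ∀ k, q' < k → k ≤ q → f k = 0) :
    (∑ k ∈ Icc p q, f k) = ∑ k ∈ Icc p q', f k := by
  refine (Finset.sum_subset (Finset.Icc_subset_Icc_right h) ?_).symm
  intro x hx hx'
  simp only [mem_Icc] at hx hx'
  exact hz x (by omega) hx.2

private lemma hsum_range_shift {M : Type*} [AddCommMonoid M] (f : ℕ → M) (m : ℕ) :
    (∑ k ∈ range m, f (k + 1)) = ∑ k ∈ Icc 1 m, f k := by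
  rw [Finset.range_eq_Ico]
  rw [show Icc 1 m = Ico (0 + 1) (m + 1) by rw [Finset.Ico_add_one_right_eq_Icc]]
  rw [← Finset.map_add_right_Ico, Finset.sum_map]
  rfl
/-- Description of the even derivations of the Leibniz superalgebra
L(α₄,…,α_n,θ) with multiplication table (1) of the paper. -/
theorem statement7 {V : Type*} [AddCommGroup V] [Module ℂ V]
    (n : ℕ) (hn : 3 ≤ n) (α : ℕ → ℂ) (θ : ℂ)
    (bas : Module.Basis (Fin n ⊕ Fin (n - 1)) ℂ V)
    (eN yN : ℕ → V)
    (heN : ∀ k (h : 1 ≤ k ∧ k ≤ n), eN k = bas (Sum.inl ⟨k - 1, by omega⟩))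
    (heN0 : ∀ k, ¬(1 ≤ k ∧ k ≤ n) → eN k = 0)
    (hyN : ∀ k (h : 1 ≤ k ∧ k ≤ n - 1), yN k = bas (Sum.inr ⟨k - 1, by omega⟩))
    (hyN0 : ∀ k, ¬(1 ≤ k ∧ k ≤ n - 1) → yN k = 0)
    (br : V →ₗ[ℂ] V →ₗ[ℂ] V)
    -- multiplication table (1):
    (hee1 : ∀ i, 1 ≤ i → i ≤ n → br (eN i) (eN 1) = if i = 1 then eN 3 else eN (i + 1))
    (hee2a : br (eN 1) (eN 2) = (∑ k ∈ Finset.Icc 4 (n - 1), α k • eN k) + θ • eN n)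
    (hee2b : ∀ i, 2 ≤ i → i ≤ n →
      br (eN i) (eN 2) = ∑ k ∈ Finset.Icc 4 n, α k • eN (i + k - 2))
    (hee0 : ∀ i j, 1 ≤ i → i ≤ n → 3 ≤ j → j ≤ n → br (eN i) (eN j) = 0)
    (hye1 : ∀ j, 1 ≤ j → j ≤ n - 1 → br (yN j) (eN 1) = yN (j + 1))
    (hye2a : br (yN 1) (eN 2) =
      (∑ k ∈ Finset.Icc 4 (n - 1), α k • yN (k - 1)) + θ • yN (n - 1))
    (hye2b : ∀ j, 2 ≤ j → j ≤ n - 1 →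
      br (yN j) (eN 2) = ∑ k ∈ Finset.Icc 4 n, α k • yN (j + k - 2))
    (hye0 : ∀ j i, 1 ≤ j → j ≤ n - 1 → 3 ≤ i → i ≤ n → br (yN j) (eN i) = 0)
    (hey1 : ∀ i, 1 ≤ i → i ≤ n →
      br (eN i) (yN 1) = if i = 1 then (1 / 2 : ℂ) • yN 2 else (1 / 2 : ℂ) • yN i)
    (hey0 : ∀ i j, 1 ≤ i → i ≤ n → 2 ≤ j → j ≤ n - 1 → br (eN i) (yN j) = 0)
    (hyy1 : ∀ j, 1 ≤ j → j ≤ n - 1 →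
      br (yN j) (yN 1) = if j = 1 then eN 1 else eN (j + 1))
    (hyy0 : ∀ j k, 1 ≤ j → j ≤ n - 1 → 2 ≤ k → k ≤ n - 1 → br (yN j) (yN k) = 0)
    -- d is an even derivation:
    (d : Module.End ℂ V)
    (hdE : ∀ x ∈ Submodule.span ℂ (Set.range fun i : Fin n => bas (Sum.inl i)),
      d x ∈ Submodule.span ℂ (Set.range fun i : Fin n => bas (Sum.inl i)))
    (hdY : ∀ x ∈ Submodule.span ℂ (Set.range fun j : Fin (n - 1) => bas (Sum.inr j)),
      d x ∈ Submodule.span ℂ (Set.range fun j : Fin (n - 1) => bas (Sum.inr j)))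
    (hder : ∀ u v : V, d (br u v) = br (d u) v + br u (d v)) :
    ∃ (a : ℕ → ℂ) (bn : ℂ),
      d (eN 1) = (2 * a 1) • eN 1 + ∑ k ∈ Finset.Icc 2 (n - 1), a k • eN (k + 1) ∧
      d (eN 2) = (2 * a 1) • eN 2 + (∑ k ∈ Finset.Icc 2 (n - 2), a k • eN (k + 1)) +
        bn • eN n ∧
      (∀ i, 3 ≤ i → i ≤ n → d (eN i) =
        (2 * ((i : ℂ) - 1) * a 1) • eN i +
          ∑ k ∈ Finset.Icc 2 (n - i + 1), a k • eN (i + k - 1)) ∧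
      (∀ i, 1 ≤ i → i ≤ n - 1 → d (yN i) =
        ((2 * (i : ℂ) - 1) * a 1) • yN i +
          ∑ k ∈ Finset.Icc 2 (n - i), a k • yN (i + k - 1)) ∧
      ((n : ℂ) - 3) * θ * a 1 = 0 ∧
      (∀ i, 4 ≤ i → i ≤ n → α i * a 1 = 0) := by
  classical
  -- totalized vanishing
  have heNz : ∀ m, n < m → eN m = 0 := fun m h => heN0 m (by omega)
  have hyNz : ∀ m, n - 1 < m → yN m = 0 := fun m h => hyN0 m (by omega)
  -- totalized multiplication table
  have he11 : br (eN 1) (eN 1) = eN 3 := by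
    rw [hee1 1 le_rfl (by omega), if_pos rfl]
  have he1 : ∀ m, 2 ≤ m → br (eN m) (eN 1) = eN (m + 1) := by
    intro m hm
    by_cases h : m ≤ n
    · rw [hee1 m (by omega) h, if_neg (by omega)]
    · rw [heN0 m (by omega), heNz (m + 1) (by omega)]; simp
  have hy1 : ∀ m, 1 ≤ m → br (yN m) (eN 1) = yN (m + 1) := by
    intro m hm
    by_cases h : m ≤ n - 1
    · exact hye1 m hm h
    · rw [hyN0 m (by omega), hyNz (m + 1) (by omega)]; simp
  have hz_ee : ∀ i j, 3 ≤ j → br (eN i) (eN j) = 0 := by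
    intro i j hj
    by_cases hi : 1 ≤ i ∧ i ≤ n
    · by_cases hjn : j ≤ n
      · exact hee0 i j hi.1 hi.2 hj hjn
      · rw [heNz j (by omega)]; simp
    · rw [heN0 i hi]; simp
  have hz_ye : ∀ m j, 3 ≤ j → br (yN m) (eN j) = 0 := by
    intro m j hj
    by_cases hm : 1 ≤ m ∧ m ≤ n - 1
    · by_cases hjn : j ≤ n
      · exact hye0 m j hm.1 hm.2 hj hjn
      · rw [heNz j (by omega)]; simp
    · rw [hyN0 m hm]; simp
  have hz_ey : ∀ i m, 2 ≤ m → br (eN i) (yN m) = 0 := by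
    intro i m hm
    by_cases hi : 1 ≤ i ∧ i ≤ n
    · by_cases hmn : m ≤ n - 1
      · exact hey0 i m hi.1 hi.2 hm hmn
      · rw [hyNz m (by omega)]; simp
    · rw [heN0 i hi]; simp
  have hz_yy : ∀ m k, 2 ≤ k → br (yN m) (yN k) = 0 := by
    intro m k hk
    by_cases hm : 1 ≤ m ∧ m ≤ n - 1
    · by_cases hkn : k ≤ n - 1
      · exact hyy0 m k hm.1 hm.2 hk hkn
      · rw [hyNz k (by omega)]; simp
    · rw [hyN0 m hm]; simp
  have he1y1 : br (eN 1) (yN 1) = (1 / 2 : ℂ) • yN 2 := by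
    rw [hey1 1 le_rfl (by omega), if_pos rfl]
  have he_y1 : ∀ m, 2 ≤ m → br (eN m) (yN 1) = (1 / 2 : ℂ) • yN m := by
    intro m hm
    by_cases h : m ≤ n
    · rw [hey1 m (by omega) h, if_neg (by omega)]
    · rw [heN0 m (by omega), hyNz m (by omega)]; simp
  have hy1y1 : br (yN 1) (yN 1) = eN 1 := by
    rw [hyy1 1 le_rfl (by omega), if_pos rfl]
  have hy_y1 : ∀ m, 2 ≤ m → br (yN m) (yN 1) = eN (m + 1) := by
    intro m hm
    by_cases h : m ≤ n - 1
    · rw [hyy1 m (by omega) h, if_neg (by omega)]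
    · rw [hyN0 m (by omega), heNz (m + 1) (by omega)]; simp
  have he_e2 : ∀ i, 2 ≤ i → br (eN i) (eN 2) = ∑ k ∈ Icc 4 n, α k • eN (i + k - 2) := by
    intro i hi
    by_cases h : i ≤ n
    · exact hee2b i hi h
    · rw [heN0 i (by omega), Finset.sum_eq_zero fun k hk => by
        simp only [mem_Icc] at hk
        rw [heNz (i + k - 2) (by omega), smul_zero]]
      simp
  have hy_e2 : ∀ m, 2 ≤ m → br (yN m) (eN 2) = ∑ k ∈ Icc 4 n, α k • yN (m + k - 2) := by
    intro m hm
    by_cases h : m ≤ n - 1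
    · exact hye2b m hm h
    · rw [hyN0 m (by omega), Finset.sum_eq_zero fun k hk => by
        simp only [mem_Icc] at hk
        rw [hyNz (m + k - 2) (by omega), smul_zero]]
      simp
  -- representation in the even/odd subspaces
  have hzero_l : ∀ x ∈ Submodule.span ℂ (Set.range fun i : Fin n => bas (Sum.inl i)),
      ∀ j : Fin (n - 1), bas.repr x (Sum.inr j) = 0 := by
    intro x hx j
    have hle : Submodule.span ℂ (Set.range fun i : Fin n => bas (Sum.inl i)) ≤
        LinearMap.ker ((Finsupp.lapply (Sum.inr j : Fin n ⊕ Fin (n - 1))).comp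
          (bas.repr : V →ₗ[ℂ] ((Fin n ⊕ Fin (n - 1)) →₀ ℂ))) := by
      rw [Submodule.span_le]
      rintro _ ⟨i, rfl⟩
      simp [LinearMap.mem_ker, Module.Basis.repr_self, Finsupp.single_apply]
    simpa using hle hx
  have hzero_r : ∀ x ∈ Submodule.span ℂ (Set.range fun j : Fin (n - 1) => bas (Sum.inr j)),
      ∀ i : Fin n, bas.repr x (Sum.inl i) = 0 := by
    intro x hx i
    have hle : Submodule.span ℂ (Set.range fun j : Fin (n - 1) => bas (Sum.inr j)) ≤
        LinearMap.ker ((Finsupp.lapply (Sum.inl i : Fin n ⊕ Fin (n - 1))).comp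
          (bas.repr : V →ₗ[ℂ] ((Fin n ⊕ Fin (n - 1)) →₀ ℂ))) := by
      rw [Submodule.span_le]
      rintro _ ⟨jj, rfl⟩
      simp [LinearMap.mem_ker, Module.Basis.repr_self, Finsupp.single_apply]
    simpa using hle hx
  have hrep_l : ∀ x ∈ Submodule.span ℂ (Set.range fun i : Fin n => bas (Sum.inl i)),
      x = ∑ i : Fin n, bas.repr x (Sum.inl i) • bas (Sum.inl i) := by
    intro x hx
    have h0 := bas.sum_repr x
    rw [Fintype.sum_sum_type] at h0
    have h1 : (∑ j : Fin (n - 1), bas.repr x (Sum.inr j) • bas (Sum.inr j)) = 0 :=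
      Finset.sum_eq_zero fun j _ => by rw [hzero_l x hx j, zero_smul]
    rw [h1, add_zero] at h0
    exact h0.symm
  have hrep_r : ∀ x ∈ Submodule.span ℂ (Set.range fun j : Fin (n - 1) => bas (Sum.inr j)),
      x = ∑ j : Fin (n - 1), bas.repr x (Sum.inr j) • bas (Sum.inr j) := by
    intro x hx
    have h0 := bas.sum_repr x
    rw [Fintype.sum_sum_type] at h0
    have h1 : (∑ i : Fin n, bas.repr x (Sum.inl i) • bas (Sum.inl i)) = 0 :=
      Finset.sum_eq_zero fun i _ => by rw [hzero_r x hx i, zero_smul]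
    rw [h1, zero_add] at h0
    exact h0.symm
  have hmem_e2 : eN 2 ∈ Submodule.span ℂ (Set.range fun i : Fin n => bas (Sum.inl i)) :=
    Submodule.subset_span ⟨⟨1, by omega⟩, (heN 2 ⟨by omega, by omega⟩).symm⟩
  have hmem_y1 : yN 1 ∈ Submodule.span ℂ (Set.range fun j : Fin (n - 1) => bas (Sum.inr j)) :=
    Submodule.subset_span ⟨⟨0, by omega⟩, (hyN 1 ⟨by omega, by omega⟩).symm⟩
  -- the coefficients
  set a : ℕ → ℂ := fun k =>
    if h : 1 ≤ k ∧ k ≤ n - 1 then bas.repr (d (yN 1)) (Sum.inr ⟨k - 1, by omega⟩) else 0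
    with ha_def
  set t : ℕ → ℂ := fun i =>
    if h : 1 ≤ i ∧ i ≤ n then bas.repr (d (eN 2)) (Sum.inl ⟨i - 1, by omega⟩) else 0
    with ht_def
  have ha_val : ∀ j : Fin (n - 1), a ((j : ℕ) + 1) = bas.repr (d (yN 1)) (Sum.inr j) := by
    intro j
    have hj := j.isLt
    simp only [ha_def]
    rw [dif_pos (by omega : 1 ≤ (j : ℕ) + 1 ∧ (j : ℕ) + 1 ≤ n - 1)]
    rfl
  have ht_val : ∀ i : Fin n, t ((i : ℕ) + 1) = bas.repr (d (eN 2)) (Sum.inl i) := by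
    intro i
    have hi := i.isLt
    simp only [ht_def]
    rw [dif_pos (by omega : 1 ≤ (i : ℕ) + 1 ∧ (i : ℕ) + 1 ≤ n)]
    rfl
  have hyN_val : ∀ j : Fin (n - 1), yN ((j : ℕ) + 1) = bas (Sum.inr j) := by
    intro j
    have hj := j.isLt
    rw [hyN ((j : ℕ) + 1) ⟨by omega, by omega⟩]
    exact congrArg bas (congrArg Sum.inr (Fin.ext (by simp)))
  have heN_val : ∀ i : Fin n, eN ((i : ℕ) + 1) = bas (Sum.inl i) := by
    intro i
    have hi := i.isLt
    rw [heN ((i : ℕ) + 1) ⟨by omega, by omega⟩]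
    exact congrArg bas (congrArg Sum.inl (Fin.ext (by simp)))
  have hdy1 : d (yN 1) = ∑ k ∈ Icc 1 (n - 1), a k • yN k := by
    calc d (yN 1) = ∑ j : Fin (n - 1), bas.repr (d (yN 1)) (Sum.inr j) • bas (Sum.inr j) :=
          hrep_r _ (hdY _ hmem_y1)
    _ = ∑ j : Fin (n - 1), a ((j : ℕ) + 1) • yN ((j : ℕ) + 1) :=
          Finset.sum_congr rfl fun j _ => by rw [ha_val j, hyN_val j]
    _ = ∑ k ∈ range (n - 1), a (k + 1) • yN (k + 1) := Fin.sum_univ_eq_sum_range (fun k => a (k + 1) • yN (k + 1)) (n - 1)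
    _ = ∑ k ∈ Icc 1 (n - 1), a k • yN k := hsum_range_shift (fun k => a k • yN k) (n - 1)
  have hde2' : d (eN 2) = ∑ i ∈ Icc 1 n, t i • eN i := by
    calc d (eN 2) = ∑ i : Fin n, bas.repr (d (eN 2)) (Sum.inl i) • bas (Sum.inl i) :=
          hrep_l _ (hdE _ hmem_e2)
    _ = ∑ i : Fin n, t ((i : ℕ) + 1) • eN ((i : ℕ) + 1) :=
          Finset.sum_congr rfl fun i _ => by rw [ht_val i, heN_val i]
    _ = ∑ k ∈ range n, t (k + 1) • eN (k + 1) := Fin.sum_univ_eq_sum_range (fun k => t (k + 1) • eN (k + 1)) n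
    _ = ∑ i ∈ Icc 1 n, t i • eN i := hsum_range_shift (fun i => t i • eN i) n
  -- coordinate functionals
  have hcoordE : ∀ j, 1 ≤ j → j ≤ n → ∃ φ : V →ₗ[ℂ] ℂ,
      (∀ m, φ (eN m) = if m = j then 1 else 0) ∧
      (∀ p q (c : ℕ → ℂ), φ (∑ k ∈ Icc p q, c k • eN k) = if j ∈ Icc p q then c j else 0) := by
    intro j hj1 hj2
    have h1 : ∀ m, (bas.coord (Sum.inl ⟨j - 1, by omega⟩)) (eN m) = if m = j then 1 else 0 := by
      intro m
      by_cases hm : 1 ≤ m ∧ m ≤ n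
      · rw [heN m hm, Module.Basis.coord_apply, Module.Basis.repr_self, Finsupp.single_apply]
        simp only [Sum.inl.injEq, Fin.mk.injEq]
        by_cases h : m = j
        · rw [if_pos (by omega), if_pos h]
        · rw [if_neg (by omega), if_neg h]
      · rw [heN0 m hm, map_zero, if_neg (by omega)]
    refine ⟨_, h1, ?_⟩
    intro p q c
    rw [map_sum]
    calc (∑ k ∈ Icc p q, (bas.coord (Sum.inl ⟨j - 1, by omega⟩)) (c k • eN k))
        = ∑ k ∈ Icc p q, if k = j then c k else 0 :=
          Finset.sum_congr rfl fun k _ => by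
            rw [map_smul, h1 k, smul_eq_mul, mul_ite, mul_one, mul_zero]
      _ = if j ∈ Icc p q then c j else 0 := Finset.sum_ite_eq' _ _ _
  have hcoordY : ∀ j, 1 ≤ j → j ≤ n - 1 → ∃ ψ : V →ₗ[ℂ] ℂ,
      (∀ m, ψ (yN m) = if m = j then 1 else 0) ∧
      (∀ p q (c : ℕ → ℂ), ψ (∑ k ∈ Icc p q, c k • yN k) = if j ∈ Icc p q then c j else 0) := by
    intro j hj1 hj2
    have h1 : ∀ m, (bas.coord (Sum.inr ⟨j - 1, by omega⟩)) (yN m) = if m = j then 1 else 0 := by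
      intro m
      by_cases hm : 1 ≤ m ∧ m ≤ n - 1
      · rw [hyN m hm, Module.Basis.coord_apply, Module.Basis.repr_self, Finsupp.single_apply]
        simp only [Sum.inr.injEq, Fin.mk.injEq]
        by_cases h : m = j
        · rw [if_pos (by omega), if_pos h]
        · rw [if_neg (by omega), if_neg h]
      · rw [hyN0 m hm, map_zero, if_neg (by omega)]
    refine ⟨_, h1, ?_⟩
    intro p q c
    rw [map_sum]
    calc (∑ k ∈ Icc p q, (bas.coord (Sum.inr ⟨j - 1, by omega⟩)) (c k • yN k))
        = ∑ k ∈ Icc p q, if k = j then c k else 0 :=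
          Finset.sum_congr rfl fun k _ => by
            rw [map_smul, h1 k, smul_eq_mul, mul_ite, mul_one, mul_zero]
      _ = if j ∈ Icc p q then c j else 0 := Finset.sum_ite_eq' _ _ _
  -- d (e 1)
  have hde1 : d (eN 1) = (2 * a 1) • eN 1 + ∑ k ∈ Icc 2 (n - 1), a k • eN (k + 1) := by
    have h := hder (yN 1) (yN 1)
    rw [hy1y1, hdy1] at h
    simp only [map_sum, map_smul, LinearMap.sum_apply, LinearMap.smul_apply] at h
    rw [hsum_bot (fun k => a k • (br (yN k)) (yN 1)) (p' := 2) (by omega : (1:ℕ) ≤ n - 1) (by norm_num),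
        hsum_bot (fun k => a k • (br (yN 1)) (yN k)) (p' := 2) (by omega : (1:ℕ) ≤ n - 1) (by norm_num)] at h
    rw [hy1y1] at h
    rw [show (∑ k ∈ Icc 2 (n - 1), a k • (br (yN k)) (yN 1)) = ∑ k ∈ Icc 2 (n - 1), a k • eN (k + 1) from
        Finset.sum_congr rfl fun k hk => by
          rw [hy_y1 k (by simp only [mem_Icc] at hk; omega)]] at h
    rw [show (∑ k ∈ Icc 2 (n - 1), a k • (br (yN 1)) (yN k)) = 0 from
        Finset.sum_eq_zero fun k hk => by
          rw [hz_yy 1 k (by simp only [mem_Icc] at hk; omega), smul_zero]] at h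
    rw [h]
    module
  -- d (e i), i ≥ 3
  have P' : ∀ i, 3 ≤ i →
      d (eN i) = (2 * ((i : ℂ) - 1) * a 1) • eN i + ∑ m ∈ Icc 2 (n - 1), a m • eN (i + m - 1) := by
    intro i hi
    induction i, hi using Nat.le_induction with
    | base =>
      have h := hder (eN 1) (eN 1)
      rw [he11, hde1] at h
      simp only [map_add, map_sum, map_smul, LinearMap.add_apply, LinearMap.sum_apply,
        LinearMap.smul_apply] at h
      rw [he11] at h
      rw [show (∑ k ∈ Icc 2 (n - 1), a k • (br (eN (k + 1))) (eN 1))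
            = ∑ m ∈ Icc 2 (n - 1), a m • eN (3 + m - 1) from
          Finset.sum_congr rfl fun k hk => by
            simp only [mem_Icc] at hk
            rw [he1 (k + 1) (by omega)]
            exact congrArg (a k • ·) (congrArg eN (by omega))] at h
      rw [show (∑ k ∈ Icc 2 (n - 1), a k • (br (eN 1)) (eN (k + 1))) = 0 from
          Finset.sum_eq_zero fun k hk => by
            simp only [mem_Icc] at hk
            rw [hz_ee 1 (k + 1) (by omega), smul_zero]] at h
      rw [h]
      push_cast
      module
    | succ i hi3 ih =>
      have h := hder (eN i) (eN 1)
      rw [he1 i (by omega), ih, hde1] at h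
      simp only [map_add, map_sum, map_smul, LinearMap.add_apply, LinearMap.sum_apply,
        LinearMap.smul_apply] at h
      rw [he1 i (by omega)] at h
      rw [show (∑ m ∈ Icc 2 (n - 1), a m • (br (eN (i + m - 1))) (eN 1))
            = ∑ m ∈ Icc 2 (n - 1), a m • eN (i + 1 + m - 1) from
          Finset.sum_congr rfl fun m hm => by
            simp only [mem_Icc] at hm
            rw [he1 (i + m - 1) (by omega)]
            exact congrArg (a m • ·) (congrArg eN (by omega))] at h
      rw [show (∑ k ∈ Icc 2 (n - 1), a k • (br (eN i)) (eN (k + 1))) = 0 from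
          Finset.sum_eq_zero fun k hk => by
            simp only [mem_Icc] at hk
            rw [hz_ee i (k + 1) (by omega), smul_zero]] at h
      rw [h]
      push_cast
      module
  -- d (y j), j ≥ 1
  have Q' : ∀ j, 1 ≤ j →
      d (yN j) = ((2 * (j : ℂ) - 1) * a 1) • yN j + ∑ m ∈ Icc 2 (n - 1), a m • yN (j + m - 1) := by
    intro j hj
    induction j, hj using Nat.le_induction with
    | base =>
      rw [hdy1, hsum_bot (fun k => a k • yN k) (p' := 2) (by omega : (1:ℕ) ≤ n - 1) (by norm_num)]
      rw [show (∑ m ∈ Icc 2 (n - 1), a m • yN (1 + m - 1)) = ∑ m ∈ Icc 2 (n - 1), a m • yN m from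
          Finset.sum_congr rfl fun m hm => congrArg (a m • ·) (congrArg yN (by omega))]
      push_cast
      module
    | succ j hj1 ih =>
      have h := hder (yN j) (eN 1)
      rw [hy1 j (by omega), ih, hde1] at h
      simp only [map_add, map_sum, map_smul, LinearMap.add_apply, LinearMap.sum_apply,
        LinearMap.smul_apply] at h
      rw [hy1 j (by omega)] at h
      rw [show (∑ m ∈ Icc 2 (n - 1), a m • (br (yN (j + m - 1))) (eN 1))
            = ∑ m ∈ Icc 2 (n - 1), a m • yN (j + 1 + m - 1) from
          Finset.sum_congr rfl fun m hm => by
            simp only [mem_Icc] at hm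
            rw [hy1 (j + m - 1) (by omega)]
            exact congrArg (a m • ·) (congrArg yN (by omega))] at h
      rw [show (∑ k ∈ Icc 2 (n - 1), a k • (br (yN j)) (eN (k + 1))) = 0 from
          Finset.sum_eq_zero fun k hk => by
            simp only [mem_Icc] at hk
            rw [hz_ye j (k + 1) (by omega), smul_zero]] at h
      rw [h]
      push_cast
      module
  -- the equation from d [e2, y1]
  have hE1a : (br (d (eN 2))) (yN 1)
      = (t 1 * (1/2 : ℂ)) • yN 2 + ∑ i ∈ Icc 2 n, (t i * (1/2 : ℂ)) • yN i := by
    rw [hde2']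
    simp only [map_sum, map_smul, LinearMap.sum_apply, LinearMap.smul_apply]
    rw [hsum_bot (fun i => t i • (br (eN i)) (yN 1)) (p' := 2) (by omega : (1:ℕ) ≤ n) (by norm_num)]
    rw [he1y1, smul_smul]
    congr 1
    refine Finset.sum_congr rfl fun i hi => ?_
    simp only [mem_Icc] at hi
    rw [he_y1 i (by omega), smul_smul]
  have hE1b : (br (eN 2)) (d (yN 1)) = (a 1 * (1/2 : ℂ)) • yN 2 := by
    rw [hdy1]
    simp only [map_sum, map_smul]
    rw [hsum_bot (fun k => a k • (br (eN 2)) (yN k)) (p' := 2) (by omega : (1:ℕ) ≤ n - 1) (by norm_num)]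
    rw [he_y1 2 le_rfl, smul_smul]
    rw [show (∑ k ∈ Icc 2 (n - 1), a k • (br (eN 2)) (yN k)) = 0 from
        Finset.sum_eq_zero fun k hk => by
          simp only [mem_Icc] at hk
          rw [hz_ey 2 k (by omega), smul_zero]]
    rw [add_zero]
  have hE1L : (1/2 : ℂ) • d (yN 2)
      = ((2 * (2:ℂ) - 1) * a 1 * (1/2 : ℂ)) • yN 2 + ∑ k ∈ Icc 3 n, (a (k - 1) * (1/2 : ℂ)) • yN k := by
    rw [Q' 2 (by omega), smul_add, smul_smul, Finset.smul_sum]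
    congr 1
    · congr 1
      push_cast
      ring
    · rw [← hsum_shift (fun k => (a (k - 1) * (1/2 : ℂ)) • yN k) 2 (n - 1) 1 3 n (by norm_num) (by omega)]
      refine Finset.sum_congr rfl fun m hm => ?_
      rw [smul_smul, Nat.add_sub_cancel]
      rw [show (2 + m - 1) = m + 1 from by omega]
      ring_nf
  have hE1' : ((2 * (2:ℂ) - 1) * a 1 * (1/2 : ℂ)) • yN 2 + ∑ k ∈ Icc 3 n, (a (k - 1) * (1/2 : ℂ)) • yN k
      = ((t 1 * (1/2 : ℂ)) • yN 2 + ∑ i ∈ Icc 2 n, (t i * (1/2 : ℂ)) • yN i) + (a 1 * (1/2 : ℂ)) • yN 2 := by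
    have h := hder (eN 2) (yN 1)
    rw [he_y1 2 le_rfl, map_smul, hE1a, hE1b, hE1L] at h
    exact h
  have ht1t2 : t 1 + t 2 = 2 * a 1 := by
    obtain ⟨ψ, hψ, hΨ⟩ := hcoordY 2 (by omega) (by omega)
    have h := congrArg ψ hE1'
    simp only [map_add, map_smul, hΨ, hψ, smul_eq_mul, Finset.mem_Icc,
      (show (2:ℕ) ≤ n from by omega), (show (2:ℕ) ≤ 2 from le_rfl),
      (show ¬((3:ℕ) ≤ 2) from by omega), if_true, if_false, mul_one, mul_zero, add_zero, zero_add,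
      and_true, true_and, false_and, and_false, eq_self_iff_true] at h
    linear_combination (-2 : ℂ) * h
  have hti : ∀ i, 3 ≤ i → i ≤ n - 1 → t i = a (i - 1) := by
    intro i h3 hi
    obtain ⟨ψ, hψ, hΨ⟩ := hcoordY i (by omega) hi
    have h := congrArg ψ hE1'
    simp only [map_add, map_smul, hΨ, hψ, smul_eq_mul, Finset.mem_Icc] at h
    rw [if_neg (show ¬(2 = i) from by omega), if_pos (show 3 ≤ i ∧ i ≤ n from by omega),
      if_pos (show 2 ≤ i ∧ i ≤ n from by omega)] at h
    linear_combination (-2 : ℂ) * h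
  -- the equation from d [e2, e2]
  have he2e2' : (br (eN 2)) (eN 2) = ∑ k ∈ Icc 4 n, α k • eN k := by
    rw [he_e2 2 le_rfl]
    exact Finset.sum_congr rfl fun k hk => congrArg (α k • ·) (congrArg eN (by omega))
  have hswap : ∀ q, (∑ m ∈ Icc 2 (n - 1), a m • ∑ k ∈ Icc 4 q, α k • eN (m + k - 1))
      = ∑ k ∈ Icc 4 q, α k • ∑ m ∈ Icc 2 (n - 1), a m • eN (k + m - 1) := by
    intro q
    calc (∑ m ∈ Icc 2 (n - 1), a m • ∑ k ∈ Icc 4 q, α k • eN (m + k - 1))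
        = ∑ m ∈ Icc 2 (n - 1), ∑ k ∈ Icc 4 q, α k • a m • eN (m + k - 1) := by
          refine Finset.sum_congr rfl fun m _ => ?_
          rw [Finset.smul_sum]
          refine Finset.sum_congr rfl fun k _ => ?_
          rw [smul_smul, smul_smul, mul_comm]
      _ = ∑ k ∈ Icc 4 q, ∑ m ∈ Icc 2 (n - 1), α k • a m • eN (m + k - 1) := Finset.sum_comm
      _ = ∑ k ∈ Icc 4 q, α k • ∑ m ∈ Icc 2 (n - 1), a m • eN (k + m - 1) := by
          refine Finset.sum_congr rfl fun k _ => ?_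
          rw [Finset.smul_sum]
          exact Finset.sum_congr rfl fun m _ =>
            congrArg (α k • ·) (congrArg (a m • ·) (congrArg eN (by omega)))
  have hLHS2 : d (∑ k ∈ Icc 4 n, α k • eN k)
      = (∑ k ∈ Icc 4 n, (α k * (2 * ((k:ℂ) - 1) * a 1)) • eN k)
        + ∑ k ∈ Icc 4 n, α k • ∑ m ∈ Icc 2 (n - 1), a m • eN (k + m - 1) := by
    rw [map_sum, ← Finset.sum_add_distrib]
    refine Finset.sum_congr rfl fun k hk => ?_
    simp only [mem_Icc] at hk
    rw [map_smul, P' k (by omega), smul_add, smul_smul]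
  have hRHS1 : (br (∑ i ∈ Icc 1 n, t i • eN i)) (eN 2)
      = t 1 • ((∑ k ∈ Icc 4 (n - 1), α k • eN k) + θ • eN n)
        + ∑ i ∈ Icc 2 n, t i • ∑ k ∈ Icc 4 n, α k • eN (i + k - 2) := by
    simp only [map_sum, map_smul, LinearMap.sum_apply, LinearMap.smul_apply]
    rw [hsum_bot (fun i => t i • (br (eN i)) (eN 2)) (p' := 2) (by omega : (1:ℕ) ≤ n) (by norm_num)]
    rw [hee2a]
    congr 1
    refine Finset.sum_congr rfl fun i hi => ?_
    simp only [mem_Icc] at hi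
    rw [he_e2 i (by omega)]
  have hRHS2 : (br (eN 2)) (∑ i ∈ Icc 1 n, t i • eN i)
      = t 1 • eN 3 + t 2 • ∑ k ∈ Icc 4 n, α k • eN k := by
    simp only [map_sum, map_smul]
    rw [hsum_bot (fun i => t i • (br (eN 2)) (eN i)) (p' := 2) (by omega : (1:ℕ) ≤ n) (by norm_num),
        hsum_bot (fun i => t i • (br (eN 2)) (eN i)) (p' := 3) (by omega : (2:ℕ) ≤ n) (by norm_num)]
    rw [show (br (eN 2)) (eN 1) = eN 3 from by rw [hee1 2 (by omega) (by omega), if_neg (by omega)]]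
    rw [he2e2']
    rw [show (∑ i ∈ Icc 3 n, t i • (br (eN 2)) (eN i)) = 0 from
        Finset.sum_eq_zero fun i hi => by
          simp only [mem_Icc] at hi
          rw [hz_ee 2 i (by omega), smul_zero]]
    rw [add_zero]
  have hDS : (∑ i ∈ Icc 2 n, t i • ∑ k ∈ Icc 4 n, α k • eN (i + k - 2))
      = t 2 • (∑ k ∈ Icc 4 n, α k • eN k)
        + ∑ k ∈ Icc 4 n, α k • ∑ m ∈ Icc 2 (n - 1), a m • eN (k + m - 1) := by
    rw [hsum_bot (fun i => t i • ∑ k ∈ Icc 4 n, α k • eN (i + k - 2)) (p' := 3)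
      (by omega : (2:ℕ) ≤ n) (by norm_num)]
    congr 1
    · exact congrArg (t 2 • ·)
        (Finset.sum_congr rfl fun k _ => congrArg (α k • ·) (congrArg eN (by omega)))
    · calc (∑ i ∈ Icc 3 n, t i • ∑ k ∈ Icc 4 n, α k • eN (i + k - 2))
          = (∑ i ∈ Icc 3 (n - 1), t i • ∑ k ∈ Icc 4 n, α k • eN (i + k - 2))
              + t n • ∑ k ∈ Icc 4 n, α k • eN (n + k - 2) :=
            hsum_top (fun i => t i • ∑ k ∈ Icc 4 n, α k • eN (i + k - 2)) (by omega) (by omega) rfl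
        _ = ∑ i ∈ Icc 3 (n - 1), t i • ∑ k ∈ Icc 4 n, α k • eN (i + k - 2) := by
            rw [show (∑ k ∈ Icc 4 n, α k • eN (n + k - 2)) = 0 from
              Finset.sum_eq_zero fun k hk => by
                simp only [mem_Icc] at hk
                rw [heNz (n + k - 2) (by omega), smul_zero], smul_zero, add_zero]
        _ = ∑ i ∈ Icc 3 (n - 1), a (i - 1) • ∑ k ∈ Icc 4 n, α k • eN (i + k - 2) :=
            Finset.sum_congr rfl fun i hi => by
              simp only [mem_Icc] at hi
              rw [hti i (by omega) (by omega)]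
        _ = ∑ m ∈ Icc 2 (n - 2), a m • ∑ k ∈ Icc 4 n, α k • eN (m + k - 1) := by
            rw [← hsum_shift (fun i => a (i - 1) • ∑ k ∈ Icc 4 n, α k • eN (i + k - 2)) 2 (n - 2) 1
              3 (n - 1) (by norm_num) (by omega)]
            refine Finset.sum_congr rfl fun m _ => ?_
            rw [Nat.add_sub_cancel]
            exact congrArg (a m • ·)
              (Finset.sum_congr rfl fun k _ => congrArg (α k • ·) (congrArg eN (by omega)))
        _ = ∑ m ∈ Icc 2 (n - 1), a m • ∑ k ∈ Icc 4 n, α k • eN (m + k - 1) := by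
            refine (hsum_trunc (fun m => a m • ∑ k ∈ Icc 4 n, α k • eN (m + k - 1))
              (by omega : n - 2 ≤ n - 1) ?_).symm
            intro m hm1 hm2
            show a m • ∑ k ∈ Icc 4 n, α k • eN (m + k - 1) = 0
            rw [show (∑ k ∈ Icc 4 n, α k • eN (m + k - 1)) = 0 from
              Finset.sum_eq_zero fun k hk => by
                simp only [mem_Icc] at hk
                rw [heNz (m + k - 1) (by omega), smul_zero], smul_zero]
        _ = ∑ k ∈ Icc 4 n, α k • ∑ m ∈ Icc 2 (n - 1), a m • eN (k + m - 1) := hswap n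
  have E2r : (∑ k ∈ Icc 4 n, (α k * (2 * ((k:ℂ) - 1) * a 1)) • eN k)
      = t 1 • ((∑ k ∈ Icc 4 (n - 1), α k • eN k) + θ • eN n) + t 1 • eN 3
        + (t 2 • (∑ k ∈ Icc 4 n, α k • eN k) + t 2 • (∑ k ∈ Icc 4 n, α k • eN k)) := by
    have h := hder (eN 2) (eN 2)
    rw [he2e2', hde2', hLHS2, hRHS1, hRHS2, hDS] at h
    apply add_right_cancel (b := ∑ k ∈ Icc 4 n, α k • ∑ m ∈ Icc 2 (n - 1), a m • eN (k + m - 1))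
    rw [h]
    abel
  -- the equation from d [e1, e2]
  have hLHS3 : d ((∑ k ∈ Icc 4 (n - 1), α k • eN k) + θ • eN n)
      = ((∑ k ∈ Icc 4 (n - 1), (α k * (2 * ((k:ℂ) - 1) * a 1)) • eN k)
          + (θ * (2 * ((n:ℂ) - 1) * a 1)) • eN n)
        + ∑ k ∈ Icc 4 (n - 1), α k • ∑ m ∈ Icc 2 (n - 1), a m • eN (k + m - 1) := by
    rw [map_add, map_smul]
    rw [show d (∑ k ∈ Icc 4 (n - 1), α k • eN k)
          = (∑ k ∈ Icc 4 (n - 1), (α k * (2 * ((k:ℂ) - 1) * a 1)) • eN k)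
            + ∑ k ∈ Icc 4 (n - 1), α k • ∑ m ∈ Icc 2 (n - 1), a m • eN (k + m - 1) from by
      rw [map_sum, ← Finset.sum_add_distrib]
      refine Finset.sum_congr rfl fun k hk => ?_
      simp only [mem_Icc] at hk
      rw [map_smul, P' k (by omega), smul_add, smul_smul]]
    rw [P' n (by omega)]
    rw [show (∑ m ∈ Icc 2 (n - 1), a m • eN (n + m - 1)) = 0 from
        Finset.sum_eq_zero fun m hm => by
          simp only [mem_Icc] at hm
          rw [heNz (n + m - 1) (by omega), smul_zero]]
    rw [add_zero, smul_smul]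
    abel
  have hRHS3a : (br ((2 * a 1) • eN 1 + ∑ k ∈ Icc 2 (n - 1), a k • eN (k + 1))) (eN 2)
      = (2 * a 1) • ((∑ k ∈ Icc 4 (n - 1), α k • eN k) + θ • eN n)
        + ∑ m ∈ Icc 2 (n - 1), a m • ∑ k ∈ Icc 4 n, α k • eN (m + k - 1) := by
    simp only [map_add, map_smul, map_sum, LinearMap.add_apply, LinearMap.smul_apply,
      LinearMap.sum_apply]
    rw [hee2a]
    congr 1
    refine Finset.sum_congr rfl fun m hm => ?_
    simp only [mem_Icc] at hm
    rw [he_e2 (m + 1) (by omega)]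
    exact congrArg (a m • ·)
      (Finset.sum_congr rfl fun k _ => congrArg (α k • ·) (congrArg eN (by omega)))
  have hRHS3b : (br (eN 1)) (∑ i ∈ Icc 1 n, t i • eN i)
      = t 1 • eN 3 + t 2 • ((∑ k ∈ Icc 4 (n - 1), α k • eN k) + θ • eN n) := by
    simp only [map_sum, map_smul]
    rw [hsum_bot (fun i => t i • (br (eN 1)) (eN i)) (p' := 2) (by omega : (1:ℕ) ≤ n) (by norm_num),
        hsum_bot (fun i => t i • (br (eN 1)) (eN i)) (p' := 3) (by omega : (2:ℕ) ≤ n) (by norm_num)]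
    rw [he11, hee2a]
    rw [show (∑ i ∈ Icc 3 n, t i • (br (eN 1)) (eN i)) = 0 from
        Finset.sum_eq_zero fun i hi => by
          simp only [mem_Icc] at hi
          rw [hz_ee 1 i (by omega), smul_zero]]
    rw [add_zero]
  have hDS3 : (∑ m ∈ Icc 2 (n - 1), a m • ∑ k ∈ Icc 4 n, α k • eN (m + k - 1))
      = ∑ k ∈ Icc 4 (n - 1), α k • ∑ m ∈ Icc 2 (n - 1), a m • eN (k + m - 1) := by
    calc (∑ m ∈ Icc 2 (n - 1), a m • ∑ k ∈ Icc 4 n, α k • eN (m + k - 1))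
        = ∑ m ∈ Icc 2 (n - 1), a m • ∑ k ∈ Icc 4 (n - 1), α k • eN (m + k - 1) :=
          Finset.sum_congr rfl fun m hm => by
            simp only [mem_Icc] at hm
            exact congrArg (a m • ·)
              (hsum_trunc (fun k => α k • eN (m + k - 1)) (by omega : n - 1 ≤ n)
                fun k hk1 hk2 => by
                  show α k • eN (m + k - 1) = 0
                  rw [heNz (m + k - 1) (by omega), smul_zero])
      _ = ∑ k ∈ Icc 4 (n - 1), α k • ∑ m ∈ Icc 2 (n - 1), a m • eN (k + m - 1) := hswap (n - 1)
  have E3r : ((∑ k ∈ Icc 4 (n - 1), (α k * (2 * ((k:ℂ) - 1) * a 1)) • eN k)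
        + (θ * (2 * ((n:ℂ) - 1) * a 1)) • eN n)
      = (2 * a 1) • ((∑ k ∈ Icc 4 (n - 1), α k • eN k) + θ • eN n) + t 1 • eN 3
        + t 2 • ((∑ k ∈ Icc 4 (n - 1), α k • eN k) + θ • eN n) := by
    have h := hder (eN 1) (eN 2)
    rw [hee2a, hde1, hde2', hLHS3, hRHS3a, hRHS3b, hDS3] at h
    apply add_right_cancel
      (b := ∑ k ∈ Icc 4 (n - 1), α k • ∑ m ∈ Icc 2 (n - 1), a m • eN (k + m - 1))
    rw [h]
    abel
  -- pinning down t 1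
  have ht1 : t 1 = 0 := by
    by_cases hn4 : 4 ≤ n
    · obtain ⟨φ, hφ, hΦ⟩ := hcoordE 3 (by omega) (by omega)
      have h := congrArg φ E2r
      simp only [map_add, map_smul, hΦ, hφ, smul_eq_mul, Finset.mem_Icc,
        (show ¬((4:ℕ) ≤ 3) from by omega), (show ¬(n = 3) from by omega),
        false_and, and_false, if_false, if_true, eq_self_iff_true,
        mul_zero, mul_one, zero_add, add_zero] at h
      linear_combination -h
    · have hn3 : n = 3 := by omega
      subst hn3
      obtain ⟨φ, hφ, hΦ⟩ := hcoordE 3 (by omega) (by omega)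
      have h2 := congrArg φ E2r
      have h3 := congrArg φ E3r
      simp only [map_add, map_smul, hΦ, hφ, smul_eq_mul, Finset.mem_Icc] at h2 h3
      norm_num at h2 h3
      linear_combination (-1/2 : ℂ) * h2 - (1/2 : ℂ) * h3 - (θ/2) * ht1t2
  have ht2 : t 2 = 2 * a 1 := by linear_combination ht1t2 - ht1
  have E2r' := E2r
  rw [ht1, ht2] at E2r'
  simp only [zero_smul, zero_add, add_zero] at E2r'
  have E3r' := E3r
  rw [ht1, ht2] at E3r'
  simp only [zero_smul, zero_add, add_zero] at E3r'
  -- the alpha constraints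
  have halpha : ∀ i, 4 ≤ i → i ≤ n → α i * a 1 = 0 := by
    intro j hj4 hjn
    obtain ⟨φ, hφ, hΦ⟩ := hcoordE j (by omega) hjn
    have h := congrArg φ E2r'
    simp only [map_add, map_smul, hΦ, hφ, smul_eq_mul, Finset.mem_Icc,
      (show (4:ℕ) ≤ j from hj4), (show j ≤ n from hjn), true_and, and_true, if_true,
      mul_zero, mul_one, zero_add, add_zero] at h
    have h6 : (2 * (j:ℂ) - 6) * (α j * a 1) = 0 := by linear_combination h
    have hj3 : (j:ℂ) ≠ 3 := by
      intro hc
      have hc2 : ((j:ℕ):ℂ) = ((3:ℕ):ℂ) := by rw [hc]; norm_num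
      have := Nat.cast_injective hc2
      omega
    rcases mul_eq_zero.mp h6 with h' | h'
    · exact absurd h' (by intro hc; exact hj3 (by linear_combination hc / 2))
    · exact h'
  -- the theta constraint
  have htheta : ((n:ℂ) - 3) * θ * a 1 = 0 := by
    by_cases hn4 : 4 ≤ n
    · obtain ⟨φ, hφ, hΦ⟩ := hcoordE n (by omega) le_rfl
      have h := congrArg φ E3r'
      simp only [map_add, map_smul, hΦ, hφ, smul_eq_mul, Finset.mem_Icc,
        (show ¬(n ≤ n - 1) from by omega), (show ¬((3:ℕ) = n) from by omega),
        and_false, false_and, if_false, if_true, eq_self_iff_true,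
        mul_zero, mul_one, zero_add, add_zero] at h
      linear_combination h / 2
    · have hn3 : n = 3 := by omega
      rw [hn3]
      push_cast
      ring
  -- assembling the answer
  refine ⟨a, t n, hde1, ?_, ?_, ?_, htheta, halpha⟩
  · rw [hde2']
    rw [hsum_bot (fun i => t i • eN i) (p' := 2) (by omega : (1:ℕ) ≤ n) (by norm_num),
        hsum_bot (fun i => t i • eN i) (p' := 3) (by omega : (2:ℕ) ≤ n) (by norm_num),
        hsum_top (fun i => t i • eN i) (q' := n - 1) (by omega : (3:ℕ) ≤ n) (by omega) rfl]
    rw [ht1, zero_smul, zero_add, ht2]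
    rw [show (∑ i ∈ Icc 3 (n - 1), t i • eN i) = ∑ k ∈ Icc 2 (n - 2), a k • eN (k + 1) from by
      calc (∑ i ∈ Icc 3 (n - 1), t i • eN i)
          = ∑ i ∈ Icc 3 (n - 1), a (i - 1) • eN i :=
            Finset.sum_congr rfl fun i hi => by
              simp only [mem_Icc] at hi
              rw [hti i (by omega) (by omega)]
        _ = ∑ k ∈ Icc 2 (n - 2), a k • eN (k + 1) := by
            rw [← hsum_shift (fun i => a (i - 1) • eN i) 2 (n - 2) 1 3 (n - 1) (by norm_num)
              (by omega)]
            exact Finset.sum_congr rfl fun k _ => by rw [Nat.add_sub_cancel]]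
    abel
  · intro i h3 hi
    rw [P' i h3]
    congr 1
    refine hsum_trunc (fun k => a k • eN (i + k - 1)) (by omega : n - i + 1 ≤ n - 1) ?_
    intro k hk1 hk2
    show a k • eN (i + k - 1) = 0
    rw [heNz (i + k - 1) (by omega), smul_zero]
  · intro i h1 hi
    rw [Q' i h1]
    congr 1
    refine hsum_trunc (fun k => a k • yN (i + k - 1)) (by omega : n - i ≤ n - 1) ?_
    intro k hk1 hk2
    show a k • yN (i + k - 1) = 0
    rw [hyNz (i + k - 1) (by omega), smul_zero]
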